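/- Let y be a regular non-degenerate n-simplex of a simplicial set X, and let μ, ν be face operators into [n] such that n lies in the image of μ or of ν. If the non-degenerate parts of y∘μ and y∘ν are equal, then μ = ν. -/

import Mathlib

open CategoryTheory GrothendieckTopology Simplicial Opposite Limits

namespace SSet

/-- Naturality of the Yoneda bijection for simplicial sets. -/
lemma yonedaEquiv_symm_naturality' {m n : SimplexCategory} (f : m ⟶ n) (X : SSet)
    (y : X.obj (op n)) :
    SSet.stdSimplex.map f ≫ (yonedaEquiv (X := X) (n := n)).symm y = (yonedaEquiv (X := X) (n := m)).symm (X.map f.op y) := by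
  ext k x
  show X.map (x.down ≫ f).op y = X.map x.down.op (X.map f.op y)
  rw [op_comp, FunctorToTypes.map_comp_apply]

variable (X : SSet)

/-- A simplex is degenerate if it is the image of a simplex of strictly lower degree
under a simplicial operator. -/
def Degenerate {n : ℕ} (y : X _⦋n⦌) : Prop :=
  ∃ (m : ℕ) (σ : (⦋n⦌ : SimplexCategory) ⟶ ⦋m⦌) (z : X _⦋m⦌), m < n ∧ y = X.map σ.op z

/-- A simplex is non-degenerate if it is not degenerate. -/
def Nondegenerate {n : ℕ} (y : X _⦋n⦌) : Prop := ¬ X.Degenerate y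

/-- The representing map `Δ[n] ⟶ X` of the `(n+1)`-st face `y ∘ δₙ₊₁` of an
`(n+1)`-simplex `y` of `X`. -/
noncomputable def lastFaceMap {n : ℕ} (y : X _⦋n+1⦌) : Δ[n] ⟶ X :=
  (yonedaEquiv (X := X) (n := ⦋n⦌)).symm (X.map (SimplexCategory.δ (Fin.last (n+1))).op y)

/-- The canonical map `Δ[n+1] ⊔_{Δ[n]} Y' ⟶ X`, where `Y'` is the simplicial subset of `X`
generated by the last face of `y` (i.e. the image of the representing map of that face). -/
noncomputable def regularityMap {n : ℕ} (y : X _⦋n+1⦌) :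
    pushout (C := SSet.{u_1}) (SSet.stdSimplex.map (SimplexCategory.δ (Fin.last (n+1))))
      (Subfunctor.toRange (X.lastFaceMap y)) ⟶ X :=
  pushout.desc ((yonedaEquiv (X := X) (n := ⦋n+1⦌)).symm y) (Subfunctor.range (X.lastFaceMap y)).ι
    (by rw [yonedaEquiv_symm_naturality']; exact (Subfunctor.toRange_ι _).symm)

/-- A simplicial set is regular if, for each of its non-degenerate simplices `y`,
the canonical map from the pushout `Δ[n+1] ⊔_{Δ[n]} Y'` to `X` is degreewise injective. -/
def IsRegular : Prop :=
  ∀ (n : ℕ) (y : X _⦋n+1⦌), X.Nondegenerate y →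
    ∀ (k : SimplexCategoryᵒᵖ), Function.Injective ((X.regularityMap y).app k)

end SSet

namespace RegAux

universe u

/-- In a colimit pushout cocone in types with `f` injective, `inl x = inl y` implies
`x = y` or both come from `S`. -/
lemma types_inl_eq_inl {S X₁ X₂ : Type u} {f : S ⟶ X₁} {g : S ⟶ X₂} {c : PushoutCocone f g}
    (hc : IsColimit c) (h₁ : Function.Injective f) {x y : X₁}
    (h : c.inl x = c.inl y) :
    x = y ∨ ∃ s s', g s = g s' ∧ x = f s ∧ y = f s' := by
  haveI : Mono f := (mono_iff_injective f).2 h₁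
  let e : c ≅ Types.Pushout.cocone f g :=
    Cocones.ext (hc.coconePointUniqueUpToIso (Types.Pushout.isColimitCocone f g)) (by aesop_cat)
  have h' : (Types.Pushout.cocone f g).inl x = (Types.Pushout.cocone f g).inl y := by
    have hx := types_congr_hom (e.hom.w WalkingSpan.left) x
    have hy := types_congr_hom (e.hom.w WalkingSpan.left) y
    dsimp at hx hy
    show Quot.mk _ _ = Quot.mk _ _
    exact hx.symm.trans ((congr_arg (fun t => e.hom.hom t) h).trans hy)
  have h'' := (Types.Pushout.quot_mk_eq_iff f g (Sum.inl x) (Sum.inl y)).1 h'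
  rw [Types.Pushout.inl_rel'_inl_iff] at h''
  obtain rfl | ⟨x₀, y₀, h₀, rfl, rfl⟩ := h''
  · exact Or.inl rfl
  · exact Or.inr ⟨x₀, y₀, h₀, rfl, rfl⟩

open SimplexCategory

/-- Key consequence of regularity: if `σ` hits the last vertex and `y∘σ = y∘τ`,
then `σ = τ`. -/
lemma hom_eq_of_comp_eq (X : SSet.{u}) {n : ℕ} (y : X _⦋n + 1⦌)
    (hreg : ∀ k, Function.Injective ((X.regularityMap y).app k))
    {m : ℕ} (σ τ : (⦋m⦌ : SimplexCategory) ⟶ ⦋n + 1⦌)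
    (hσ : Fin.last (n + 1) ∈ Set.range σ.toOrderHom)
    (h : X.map σ.op y = X.map τ.op y) : σ = τ := by
  set f := SSet.stdSimplex.map (SimplexCategory.δ (Fin.last (n + 1))) with hfdef
  set g := Subfunctor.toRange (X.lastFaceMap y) with hgdef
  have hfinj : ∀ (K : SimplexCategoryᵒᵖ), Function.Injective (f.app K) := by
    intro K a b hab
    have h' : a.down ≫ SimplexCategory.δ (Fin.last (n + 1)) =
        b.down ≫ SimplexCategory.δ (Fin.last (n + 1)) := congrArg ULift.down hab
    exact Equiv.ulift.injective ((cancel_mono (SimplexCategory.δ (Fin.last (n + 1)))).1 h')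
  have hinl : pushout.inl f g ≫ X.regularityMap y = (SSet.yonedaEquiv (X := X) (n := ⦋n + 1⦌)).symm y :=
    pushout.inl_desc _ _ _
  have happ : ∀ ρ : (⦋m⦌ : SimplexCategory) ⟶ ⦋n + 1⦌,
      (X.regularityMap y).app (op ⦋m⦌)
        ((pushout.inl f g).app (op ⦋m⦌) (SSet.stdSimplex.objEquiv.symm ρ)) =
        X.map ρ.op y := by
    intro ρ
    have h1 := types_congr_hom (NatTrans.congr_app hinl (op ⦋m⦌))
      (SSet.stdSimplex.objEquiv.symm ρ)
    simp only [NatTrans.comp_app, types_comp_apply] at h1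
    exact h1
  have heq : (pushout.inl f g).app (op ⦋m⦌) (SSet.stdSimplex.objEquiv.symm σ) =
      (pushout.inl f g).app (op ⦋m⦌) (SSet.stdSimplex.objEquiv.symm τ) :=
    hreg (op ⦋m⦌) (by rw [happ σ, happ τ]; exact h)
  have hco := isColimitOfHasPushoutOfPreservesColimit
    ((evaluation SimplexCategoryᵒᵖ (Type u)).obj (op ⦋m⦌)) f g
  rcases types_inl_eq_inl hco (hfinj (op ⦋m⦌)) heq with h' | ⟨s, s', _, hx, _⟩
  · exact SSet.stdSimplex.objEquiv.symm.injective h'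
  · exfalso
    have hfac : σ = s.down ≫ SimplexCategory.δ (Fin.last (n + 1)) := congrArg ULift.down hx
    obtain ⟨j, hj⟩ := hσ
    have : (s.down ≫ SimplexCategory.δ (Fin.last (n + 1))).toOrderHom j = Fin.last (n + 1) := by
      rw [← hfac]; exact hj
    exact Fin.succAbove_ne (Fin.last (n + 1)) (s.down.toOrderHom j) this

/-- The main argument, in the case where `μ` hits the last vertex. -/
lemma key (X : SSet.{u}) {n : ℕ} (y : X _⦋n + 1⦌)
    (hreg : ∀ k, Function.Injective ((X.regularityMap y).app k))
    {k l : ℕ} (μ : (⦋k⦌ : SimplexCategory) ⟶ ⦋n + 1⦌) (ν : (⦋l⦌ : SimplexCategory) ⟶ ⦋n + 1⦌)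
    (hμ : Mono μ) (hν : Mono ν)
    (hlast : Fin.last (n + 1) ∈ Set.range μ.toOrderHom)
    {m : ℕ} (z : X _⦋m⦌) (α : (⦋k⦌ : SimplexCategory) ⟶ ⦋m⦌)
    (β : (⦋l⦌ : SimplexCategory) ⟶ ⦋m⦌) (hα : Epi α) (hβ : Epi β)
    (h1 : X.map μ.op y = X.map α.op z) (h2 : X.map ν.op y = X.map β.op z) :
    (⟨k, μ⟩ : Σ k : ℕ, ((⦋k⦌ : SimplexCategory) ⟶ ⦋n + 1⦌)) = ⟨l, ν⟩ := by
  haveI := hμ; haveI := hν; haveI := hα; haveI := hβ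
  haveI : IsSplitEpi α := isSplitEpi_of_epi α
  obtain ⟨s, hsα⟩ : ∃ s : (⦋m⦌ : SimplexCategory) ⟶ ⦋k⦌, s ≫ α = 𝟙 _ :=
    ⟨section_ α, IsSplitEpi.id α⟩
  have hz : z = X.map (s ≫ μ).op y := by
    have h3 : X.map s.op (X.map α.op z) = z := by
      rw [← FunctorToTypes.map_comp_apply, ← op_comp, hsα, op_id, FunctorToTypes.map_id_apply]
    rw [← h3, ← h1, ← FunctorToTypes.map_comp_apply, ← op_comp]
  have hμeq : μ = α ≫ s ≫ μ := by
    apply hom_eq_of_comp_eq X y hreg μ _ hlast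
    rw [h1, hz]
    simp only [op_comp, FunctorToTypes.map_comp_apply]
  have hαs : α ≫ s = 𝟙 _ := by
    have h4 : (α ≫ s) ≫ μ = 𝟙 _ ≫ μ := by
      rw [Category.assoc, Category.id_comp]; exact hμeq.symm
    exact (cancel_mono μ).1 h4
  haveI : IsSplitMono α := IsSplitMono.mk' ⟨s, hαs⟩
  have hkm : k = m := le_antisymm
    (by simpa using SimplexCategory.len_le_of_mono α)
    (by simpa using SimplexCategory.len_le_of_epi α)
  subst hkm
  have hα1 : α = 𝟙 _ := SimplexCategory.eq_id_of_epi α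
  rw [hα1, op_id, FunctorToTypes.map_id_apply] at h1
  -- now h1 : X.map μ.op y = z
  have hβμ : β ≫ μ = ν := by
    apply hom_eq_of_comp_eq X y hreg _ _ ?_ ?_
    · obtain ⟨j, hj⟩ := hlast
      obtain ⟨x, hx⟩ := (SimplexCategory.epi_iff_surjective.1 hβ) j
      refine ⟨x, ?_⟩
      show μ.toOrderHom (β.toOrderHom x) = _
      rw [hx, hj]
    · rw [op_comp, FunctorToTypes.map_comp_apply, h1, ← h2]
  haveI : Mono (β ≫ μ) := by rw [hβμ]; exact hν
  haveI : Mono β := mono_of_mono β μ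
  have hlk : l = k := le_antisymm
    (by simpa using SimplexCategory.len_le_of_mono β)
    (by simpa using SimplexCategory.len_le_of_epi β)
  subst hlk
  have hβ1 : β = 𝟙 _ := SimplexCategory.eq_id_of_epi β
  rw [hβ1, Category.id_comp] at hβμ
  rw [hβμ]

end RegAux



open SimplexCategory

/-- Let `y` be a regular non-degenerate `(n+1)`-simplex of a simplicial set `X`, and let
`μ`, `ν` be face operators into `[n+1]` such that the last vertex lies in the image of `μ`
or of `ν`. If `y ∘ μ` and `y ∘ ν` have the same non-degenerate part, then `μ = ν`. -/
theorem face_operators_eq_of_nondeg_part_eq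
    (X : SSet) {n : ℕ} (y : X _⦋n + 1⦌) (hy : X.Nondegenerate y)
    (hreg : ∀ k, Function.Injective ((X.regularityMap y).app k))
    {k l : ℕ} (μ : (⦋k⦌ : SimplexCategory) ⟶ ⦋n + 1⦌) (ν : (⦋l⦌ : SimplexCategory) ⟶ ⦋n + 1⦌)
    (hμ : Mono μ) (hν : Mono ν)
    (hlast : Fin.last (n + 1) ∈ Set.range μ.toOrderHom ∨
      Fin.last (n + 1) ∈ Set.range ν.toOrderHom)
    (hsharp : ∃ (m : ℕ) (z : X _⦋m⦌) (α : (⦋k⦌ : SimplexCategory) ⟶ ⦋m⦌)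
      (β : (⦋l⦌ : SimplexCategory) ⟶ ⦋m⦌), Epi α ∧ Epi β ∧ X.Nondegenerate z ∧
        X.map μ.op y = X.map α.op z ∧ X.map ν.op y = X.map β.op z) :
    (⟨k, μ⟩ : Σ k : ℕ, ((⦋k⦌ : SimplexCategory) ⟶ ⦋n + 1⦌)) = ⟨l, ν⟩ := by
  obtain ⟨m, z, α, β, hα, hβ, hz, h1, h2⟩ := hsharp
  rcases hlast with hl | hl
  · exact RegAux.key X y hreg μ ν hμ hν hl z α β hα hβ h1 h2
  · exact (RegAux.key X y hreg ν μ hν hμ hl z β α hβ hα h2 h1).symm
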